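/- Let C be a cartesian closed category with terminal object 1 and a fixed object S admitting a global element s₀ : 1 ⟶ S, and T the state monad T X = (S × X)^S. Fix an object Y and consider the T-algebra K Y = (Y^S, ε_Y^S). Its structure map satisfies ε_Y^S ∘ (q_{S×Y^S})^* = (q_Y)^* ∘ ε_Y, and for any factorization ε_Y^S ∘ (q_{S×Y^S})^* = m ∘ e with e : S × Y^S ⟶ Y' a regular epimorphism and m : Y' ⟶ Y^S a monomorphism, there is a unique isomorphism ξ : Y ≅ Y' such that ξ ∘ ε_Y = e and m ∘ ξ = (q_Y)^*. -/

import Mathlib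

open CategoryTheory CategoryTheory.MonoidalCategory CategoryTheory.Limits
  CategoryTheory.CartesianMonoidalCategory CategoryTheory.CartesianClosed

/-- In a cartesian closed category `C` with terminal object `1` and an object
`S` with a global element `s₀ : 1 ⟶ S`, fix an object `Y` and consider the `T`-algebra
`K Y = (Y^S, ε_Y^S)`.  Its structure map satisfies
`ε_Y^S ∘ (q_{S×Y^S})^* = (q_Y)^* ∘ ε_Y`, and for any factorization of `ε_Y^S ∘ (q_{S×Y^S})^*`
as a regular epi `e : S × Y^S ⟶ Y'` followed by a mono `m : Y' ⟶ Y^S`, there is a unique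
isomorphism `ξ : Y ≅ Y'` with `ξ ∘ ε_Y = e` and `m ∘ ξ = (q_Y)^*`. -/
theorem stmt15 {C : Type u} [Category.{v} C] [CartesianMonoidalCategory C] [MonoidalClosed C]
    (S : C) (s₀ : 𝟙_ C ⟶ S) (Y : C) :
    (MonoidalClosed.curry (snd S (S ⊗ (S ⟹ Y))) ≫ (ihom S).map ((ihom.ev S).app Y) =
        (ihom.ev S).app Y ≫ MonoidalClosed.curry (snd S Y)) ∧
      ∀ (Y' : C) (e : S ⊗ (S ⟹ Y) ⟶ Y') (m : Y' ⟶ (S ⟹ Y)),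
        Nonempty (RegularEpi e) → Mono m →
        MonoidalClosed.curry (snd S (S ⊗ (S ⟹ Y))) ≫ (ihom S).map ((ihom.ev S).app Y) =
          e ≫ m →
        ∃! ξ : Y ≅ Y',
          (ihom.ev S).app Y ≫ ξ.hom = e ∧ ξ.hom ≫ m = MonoidalClosed.curry (snd S Y) := by
  set ev := (ihom.ev S).app Y with hev
  set j := MonoidalClosed.curry (snd S Y) with hj
  -- the structure-map identity
  have key : MonoidalClosed.curry (snd S (S ⊗ (S ⟹ Y))) ≫ (ihom S).map ev = ev ≫ j := by
    rw [← MonoidalClosed.curry_natural_right, ← MonoidalClosed.curry_natural_left]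
    congr 1
    exact (whiskerLeft_snd _ _).symm
  -- `ev` is a split epi
  have hsec : ((λ_ Y).inv ≫ s₀ ▷ Y ≫ S ◁ j) ≫ ev = 𝟙 Y := by
    have huj : S ◁ j ≫ ev = snd S Y := by
      rw [hev, ← MonoidalClosed.uncurry_eq, hj, MonoidalClosed.uncurry_curry]
    simp [huj, whiskerRight_snd]
  haveI : IsSplitEpi ev := ⟨⟨⟨_, hsec⟩⟩⟩
  -- `j` is mono (split mono)
  have hret : j ≫ ((λ_ (S ⟹ Y)).inv ≫ s₀ ▷ (S ⟹ Y) ≫ ev) = 𝟙 Y := by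
    have : (𝟙_ C ◁ j) ≫ s₀ ▷ (S ⟹ Y) = s₀ ▷ Y ≫ S ◁ j :=
      whisker_exchange s₀ j
    have huj : S ◁ j ≫ ev = snd S Y := by
      rw [hev, ← MonoidalClosed.uncurry_eq, hj, MonoidalClosed.uncurry_curry]
    calc j ≫ (λ_ (S ⟹ Y)).inv ≫ s₀ ▷ (S ⟹ Y) ≫ ev
        = (λ_ Y).inv ≫ (𝟙_ C ◁ j) ≫ s₀ ▷ (S ⟹ Y) ≫ ev := by
          rw [← MonoidalCategory.leftUnitor_inv_naturality_assoc]
      _ = (λ_ Y).inv ≫ s₀ ▷ Y ≫ S ◁ j ≫ ev := by rw [reassoc_of% this]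
      _ = 𝟙 Y := by simp [huj, whiskerRight_snd]
  haveI : IsSplitMono j := ⟨⟨⟨_, hret⟩⟩⟩
  refine ⟨key, ?_⟩
  intro Y' e m ⟨hre⟩ hm hfac
  haveI : IsRegularEpi e := ⟨⟨hre⟩⟩
  haveI := hm
  have hsq : e ≫ m = ev ≫ j := by rw [← hfac, key]
  -- lift `ξ : Y ⟶ Y'` against the strong epi `ev` and the mono `m`
  have sq1 : CommSq e ev m j := ⟨hsq⟩
  have sq2 : CommSq ev e j m := ⟨hsq.symm⟩
  let ξh : Y ⟶ Y' := sq1.lift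
  let t : Y' ⟶ Y := sq2.lift
  have h1 : ev ≫ ξh = e := sq1.fac_left
  have h2 : ξh ≫ m = j := sq1.fac_right
  have h3 : e ≫ t = ev := sq2.fac_left
  have h4 : t ≫ j = m := sq2.fac_right
  have hinv1 : ξh ≫ t = 𝟙 Y := by
    rw [← cancel_epi ev, reassoc_of% h1, h3]; simp
  have hinv2 : t ≫ ξh = 𝟙 Y' := by
    rw [← cancel_epi e, reassoc_of% h3, h1]; simp
  refine ⟨⟨ξh, t, hinv1, hinv2⟩, ⟨h1, h2⟩, ?_⟩
  rintro ξ' ⟨h1', _⟩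
  apply Iso.ext
  rw [← cancel_epi ev, h1', h1]
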